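/- Let (I_ℓ)_{ℓ≥1} be a sequence of complex numbers with (I_ℓ - I_{ℓ-1})/ℓ → 0 as ℓ → ∞. If the Cesàro means of (I_{2ℓ}) converge to A and the Cesàro means of (I_{2ℓ} - I_{2ℓ-1}) converge to B, then the Cesàro means of (I_ℓ) converge to A - B/2. -/

import Mathlib

open Filter Finset

lemma inv_natCast_tendsto : Tendsto (fun k : ℕ => (k : ℂ)⁻¹) atTop (nhds 0) :=
  tendsto_inv_atTop_nhds_zero_nat (𝕜 := ℂ)

lemma lim_ratio (a b c d : ℂ) (hc : c ≠ 0) :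
    Tendsto (fun k : ℕ => (a * k + b) / (c * k + d)) atTop (nhds (a / c)) := by
  have h1 : Tendsto (fun k : ℕ => a + b * (k : ℂ)⁻¹) atTop (nhds a) := by
    simpa using tendsto_const_nhds.add (inv_natCast_tendsto.const_mul b)
  have h2 : Tendsto (fun k : ℕ => c + d * (k : ℂ)⁻¹) atTop (nhds c) := by
    simpa using tendsto_const_nhds.add (inv_natCast_tendsto.const_mul d)
  refine (h1.div h2 hc).congr' ?_
  filter_upwards [eventually_ge_atTop 1] with k hk
  have hk' : (k : ℂ) ≠ 0 := Nat.cast_ne_zero.mpr (by omega)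
  simp only [Pi.div_apply]
  have e1 : a * ↑k + b = (a + b * (↑k)⁻¹) * ↑k := by
    rw [add_mul, mul_assoc, inv_mul_cancel₀ hk', mul_one]
  have e2 : c * ↑k + d = (c + d * (↑k)⁻¹) * ↑k := by
    rw [add_mul, mul_assoc, inv_mul_cancel₀ hk', mul_one]
  rw [e1, e2, mul_div_mul_right _ _ hk']

lemma tendsto_of_even_odd {f : ℕ → ℂ} {L : ℂ}
    (he : Tendsto (fun k => f (2 * k)) atTop (nhds L))
    (ho : Tendsto (fun k => f (2 * k + 1)) atTop (nhds L)) :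
    Tendsto f atTop (nhds L) := by
  rw [tendsto_atTop'] at *
  intro s hs
  obtain ⟨N1, h1⟩ := he s hs
  obtain ⟨N2, h2⟩ := ho s hs
  refine ⟨2 * (max N1 N2), fun n hn => ?_⟩
  rcases Nat.even_or_odd n with ⟨k, hk⟩ | ⟨k, hk⟩
  · have : k ≥ N1 := by omega
    have := h1 k this; simpa [hk, two_mul] using this
  · have : k ≥ N2 := by omega
    have := h2 k this; simpa [hk, two_mul] using this

lemma cesaro_term (a : ℕ → ℂ) (A : ℂ)
    (h : Tendsto (fun k : ℕ => (k : ℂ)⁻¹ * ∑ ℓ ∈ Icc 1 k, a ℓ) atTop (nhds A)) :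
    Tendsto (fun k : ℕ => (k : ℂ)⁻¹ * a k) atTop (nhds 0) := by
  set f : ℕ → ℂ := fun k => (k : ℂ)⁻¹ * ∑ ℓ ∈ Icc 1 k, a ℓ with hf
  have hshift : Tendsto (fun k : ℕ => f (k - 1)) atTop (nhds A) :=
    h.comp (tendsto_sub_atTop_nat 1)
  have hratio : Tendsto (fun k : ℕ => ((k - 1 : ℕ) : ℂ) * (k : ℂ)⁻¹) atTop (nhds 1) := by
    have : Tendsto (fun k : ℕ => 1 - (k : ℂ)⁻¹) atTop (nhds 1) := by
      simpa using tendsto_const_nhds.sub inv_natCast_tendsto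
    refine this.congr' ?_
    filter_upwards [eventually_ge_atTop 1] with k hk
    have hk' : (k : ℂ) ≠ 0 := Nat.cast_ne_zero.mpr (by omega)
    rw [Nat.cast_sub (by omega), sub_mul, mul_inv_cancel₀ hk']
    simp
  have hg : Tendsto (fun k : ℕ => f k - ((k - 1 : ℕ) : ℂ) * (k : ℂ)⁻¹ * f (k - 1))
      atTop (nhds 0) := by
    simpa using h.sub (hratio.mul hshift)
  refine hg.congr' ?_
  filter_upwards [eventually_ge_atTop 1] with k hk
  obtain ⟨m, rfl⟩ : ∃ m, k = m + 1 := ⟨k - 1, by omega⟩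
  simp only [hf, Nat.add_sub_cancel]
  rw [Finset.sum_Icc_succ_top (by omega)]
  rcases Nat.eq_zero_or_pos m with rfl | hm
  · simp
  · have hm' : (m : ℂ) ≠ 0 := Nat.cast_ne_zero.mpr (by omega)
    have hm1 : ((m : ℂ) + 1) ≠ 0 := by
      have : ((m + 1 : ℕ) : ℂ) ≠ 0 := Nat.cast_ne_zero.mpr (by omega)
      push_cast at this; exact this
    push_cast
    field_simp
    ring

lemma sum_split (I : ℕ → ℂ) (k : ℕ) :
    ∑ ℓ ∈ Icc 1 (2 * k), I ℓ
      = (∑ ℓ ∈ Icc 1 k, I (2 * ℓ)) + ∑ ℓ ∈ Icc 1 k, I (2 * ℓ - 1) := by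
  induction k with
  | zero => simp
  | succ n ih =>
    have h1 : 2 * (n + 1) = 2 * n + 1 + 1 := by ring
    rw [h1, Finset.sum_Icc_succ_top (by omega : 1 ≤ 2 * n + 1 + 1),
      Finset.sum_Icc_succ_top (by omega : 1 ≤ 2 * n + 1),
      Finset.sum_Icc_succ_top (by omega : 1 ≤ n + 1),
      Finset.sum_Icc_succ_top (by omega : 1 ≤ n + 1), ih,
      show 2 * (n + 1) - 1 = 2 * n + 1 from by omega,
      show 2 * (n + 1) = 2 * n + 1 + 1 from by ring]
    ring
theorem cesaro_of_even_and_differences (I : ℕ → ℂ) (A B : ℂ)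
    (hdiff : Tendsto (fun ℓ : ℕ => (I ℓ - I (ℓ - 1)) / (ℓ : ℂ)) atTop (nhds 0))
    (hA : Tendsto (fun k : ℕ => (k : ℂ)⁻¹ * ∑ ℓ ∈ Finset.Icc 1 k, I (2 * ℓ))
      atTop (nhds A))
    (hB : Tendsto (fun k : ℕ => (k : ℂ)⁻¹ * ∑ ℓ ∈ Finset.Icc 1 k,
        (I (2 * ℓ) - I (2 * ℓ - 1))) atTop (nhds B)) :
    Tendsto (fun k : ℕ => (k : ℂ)⁻¹ * ∑ ℓ ∈ Finset.Icc 1 k, I ℓ)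
      atTop (nhds (A - B / 2)) := by
  -- Cesàro means of odd-indexed terms
  have hOdd : Tendsto (fun k : ℕ => (k : ℂ)⁻¹ * ∑ ℓ ∈ Finset.Icc 1 k, I (2 * ℓ - 1))
      atTop (nhds (A - B)) := by
    refine (hA.sub hB).congr fun k => ?_
    rw [← mul_sub, ← Finset.sum_sub_distrib]
    congr 1
    exact Finset.sum_congr rfl fun ℓ _ => by ring
  -- Even subsequence of the Cesàro means
  have hEven : Tendsto (fun k : ℕ => ((2 * k : ℕ) : ℂ)⁻¹ * ∑ ℓ ∈ Finset.Icc 1 (2 * k), I ℓ)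
      atTop (nhds (A - B / 2)) := by
    have h := (hA.const_mul (2⁻¹ : ℂ)).add (hOdd.const_mul (2⁻¹ : ℂ))
    have hval : (2⁻¹ : ℂ) * A + 2⁻¹ * (A - B) = A - B / 2 := by ring
    rw [hval] at h
    refine h.congr fun k => ?_
    rw [sum_split]
    push_cast
    rw [mul_inv]
    ring
  -- term/k → 0 along even indices
  have h1 : Tendsto (fun k : ℕ => (k : ℂ)⁻¹ * I (2 * k)) atTop (nhds 0) :=
    cesaro_term _ _ hA
  have h1s : Tendsto (fun k : ℕ => ((k + 1 : ℕ) : ℂ)⁻¹ * I (2 * (k + 1))) atTop (nhds 0) :=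
    h1.comp (tendsto_add_atTop_nat 1)
  -- I(2k+2)/(2k+1) → 0
  have hI2 : Tendsto (fun k : ℕ => I (2 * k + 2) / ((2 * k + 1 : ℕ) : ℂ)) atTop (nhds 0) := by
    have hr := lim_ratio 1 1 2 1 two_ne_zero
    have h := h1s.mul hr
    rw [zero_mul] at h
    refine h.congr fun k => ?_
    have hk1 : ((k + 1 : ℕ) : ℂ) ≠ 0 := Nat.cast_ne_zero.mpr (by omega)
    have hk2 : ((2 * k + 1 : ℕ) : ℂ) ≠ 0 := Nat.cast_ne_zero.mpr (by omega)
    rw [show 2 * (k + 1) = 2 * k + 2 from by omega]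
    push_cast at hk1 hk2 ⊢
    field_simp
    try ring
  -- difference term along the shifted even indices
  have hd2 : Tendsto (fun k : ℕ => (I (2 * k + 2) - I (2 * k + 1)) / ((2 * k + 1 : ℕ) : ℂ))
      atTop (nhds 0) := by
    have hcomp : Tendsto (fun k : ℕ => 2 * k + 2) atTop atTop :=
      tendsto_atTop_mono (fun k : ℕ => by omega : ∀ k : ℕ, k ≤ 2 * k + 2) tendsto_id
    have h0 : Tendsto (fun k : ℕ => (I (2 * k + 2) - I (2 * k + 2 - 1)) / ((2 * k + 2 : ℕ) : ℂ))
        atTop (nhds 0) := hdiff.comp hcomp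
    have hr := lim_ratio 2 2 2 1 two_ne_zero
    have h := h0.mul hr
    rw [zero_mul] at h
    refine h.congr fun k => ?_
    have hk1 : ((2 * k + 2 : ℕ) : ℂ) ≠ 0 := Nat.cast_ne_zero.mpr (by omega)
    have hk2 : ((2 * k + 1 : ℕ) : ℂ) ≠ 0 := Nat.cast_ne_zero.mpr (by omega)
    rw [show 2 * k + 2 - 1 = 2 * k + 1 from by omega]
    push_cast at hk1 hk2 ⊢
    field_simp
    try ring
  -- I(2k+1)/(2k+1) → 0
  have hterm : Tendsto (fun k : ℕ => ((2 * k + 1 : ℕ) : ℂ)⁻¹ * I (2 * k + 1))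
      atTop (nhds 0) := by
    have h := hI2.sub hd2
    rw [sub_zero] at h
    refine h.congr fun k => ?_
    rw [div_sub_div_same]
    rw [show I (2 * k + 2) - (I (2 * k + 2) - I (2 * k + 1)) = I (2 * k + 1) from by ring]
    rw [div_eq_inv_mul]
  -- Odd subsequence of the Cesàro means
  have hOddIdx : Tendsto
      (fun k : ℕ => ((2 * k + 1 : ℕ) : ℂ)⁻¹ * ∑ ℓ ∈ Finset.Icc 1 (2 * k + 1), I ℓ)
      atTop (nhds (A - B / 2)) := by
    have hr := lim_ratio 2 0 2 1 two_ne_zero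
    have h := (hEven.mul hr).add hterm
    rw [add_zero, show (A - B / 2) * (2 / 2) = A - B / 2 from by norm_num] at h
    refine h.congr' ?_
    filter_upwards [eventually_ge_atTop 1] with k hk
    rw [Finset.sum_Icc_succ_top (by omega : 1 ≤ 2 * k + 1)]
    have hk1 : ((2 * k : ℕ) : ℂ) ≠ 0 := Nat.cast_ne_zero.mpr (by omega)
    have hk2 : ((2 * k + 1 : ℕ) : ℂ) ≠ 0 := Nat.cast_ne_zero.mpr (by omega)
    push_cast at hk1 hk2 ⊢
    have hk3 : (k : ℂ) ≠ 0 := Nat.cast_ne_zero.mpr (by omega)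
    field_simp
    try ring
  exact tendsto_of_even_odd hEven hOddIdx
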